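/- Let f be a C³ probability density with support (0,∞), and suppose there exist c > 0 and ε₀ > 0 such that the integrals ∫_c^∞ f^{-1}(f')² dx, ∫_c^∞ sup_{0≤t₁≤ε₀} f(x+t₁) sup_{0≤t₂≤ε₀} |f^{-3}(f')³(x+t₂)| dx, ∫_c^∞ sup_{0≤t₁≤ε₀} f(x+t₁) sup_{0≤t₂≤ε₀}|f^{-2} f' f''(x+t₂)| dx, and ∫_c^∞ sup_{0≤t₁≤ε₀} f(x+t₁) sup_{0≤t₂≤ε₀}|f^{-1}f'''(x+t₂)| dx are all finite. Define I⁺_s(c,f,ε) := ∫_c^∞ f(x)^{1-s} f(x+ε)^s dx − ∫_c^∞ f(x) dx + f(c)sε + (s/2)f'(c)ε². Then lim_{ε→+0} I⁺_s(c,f,ε)/ε² = −(s(1-s)/2)·∫_c^∞ f(x)^{-1} f'(x)² dx, uniformly for s ∈ (0,1). -/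

import Mathlib

open MeasureTheory Real Filter

lemma aux_limit_zero {g : ℝ → ℝ} {a l : ℝ}
    (hint : IntegrableOn g (Set.Ioi a)) (hlim : Tendsto g atTop (nhds l)) : l = 0 := by
  by_contra hl
  have hpos : 0 < |l| / 2 := by positivity
  have hev : ∀ᶠ x in atTop, |l| / 2 ≤ |g x| := by
    filter_upwards [hlim.eventually (Metric.ball_mem_nhds l hpos)] with x hx
    have : |g x - l| < |l| / 2 := by simpa [Real.dist_eq] using hx
    have := abs_sub_abs_le_abs_sub l (g x)
    rw [abs_sub_comm l (g x)] at this
    linarith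
  obtain ⟨A, hA⟩ := hev.exists_forall_of_atTop
  have hA' : IntegrableOn g (Set.Ioi (max a A)) :=
    hint.mono (Set.Ioi_subset_Ioi (le_max_left _ _)) le_rfl
  have hconst : IntegrableOn (fun _ : ℝ => |l| / 2) (Set.Ioi (max a A)) := by
    refine Integrable.mono hA' (aestronglyMeasurable_const) ?_
    refine (ae_restrict_iff' measurableSet_Ioi).2 (Filter.Eventually.of_forall fun x hx => ?_)
    have : A ≤ x := le_of_lt (lt_of_le_of_lt (le_max_right a A) hx)
    simpa [abs_of_pos hpos, abs_of_nonneg (le_of_lt hpos)] using hA x this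
  rw [integrableOn_const_iff] at hconst
  rcases hconst with h | h
  · rw [enorm_eq_zero] at h
    exact hl (by simpa using abs_eq_zero.mp (by linarith [abs_nonneg l, (by linarith : |l| / 2 = 0)]))
  · simp [Real.volume_Ioi] at h

lemma aux_taylor {g g1 g2 g3 : ℝ → ℝ} {ε C : ℝ} (hε : 0 < ε)
    (hd1 : ∀ t ∈ Set.Icc 0 ε, HasDerivAt g (g1 t) t)
    (hd2 : ∀ t ∈ Set.Icc 0 ε, HasDerivAt g1 (g2 t) t)
    (hd3 : ∀ t ∈ Set.Icc 0 ε, HasDerivAt g2 (g3 t) t)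
    (hcont : ContinuousOn g3 (Set.Icc 0 ε))
    (hC : ∀ t ∈ Set.Icc 0 ε, |g3 t| ≤ C) :
    |g ε - g 0 - ε * g1 0 - ε ^ 2 / 2 * g2 0| ≤ ε ^ 3 / 2 * C := by
  set H : ℝ → ℝ := fun t => g t + (ε - t) * g1 t + (ε - t) ^ 2 / 2 * g2 t with hH
  have hicc : Set.uIcc 0 ε = Set.Icc 0 ε := Set.uIcc_of_le hε.le
  have hHd : ∀ t ∈ Set.uIcc 0 ε, HasDerivAt H ((ε - t) ^ 2 / 2 * g3 t) t := by
    intro t ht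
    rw [hicc] at ht
    have h1 := hd1 t ht
    have h2 := hd2 t ht
    have h3 := hd3 t ht
    have ha : HasDerivAt (fun u : ℝ => ε - u) (-1) t := by
      simpa using (hasDerivAt_id t).const_sub ε
    have hb : HasDerivAt (fun u : ℝ => (ε - u) * g1 u) ((-1) * g1 t + (ε - t) * g2 t) t :=
      ha.mul h2
    have hc : HasDerivAt (fun u : ℝ => (ε - u) ^ 2 / 2) ((ε - t) * (-1)) t := by
      have := (ha.pow 2).div_const 2
      refine this.congr_deriv ?_
      push_cast
      ring
    have hcc : HasDerivAt (fun u : ℝ => (ε - u) ^ 2 / 2 * g2 u)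
        ((ε - t) * (-1) * g2 t + (ε - t) ^ 2 / 2 * g3 t) t := hc.mul h3
    have := (h1.add hb).add hcc
    refine this.congr_deriv ?_
    ring
  have hInt : IntervalIntegrable (fun t => (ε - t) ^ 2 / 2 * g3 t) volume 0 ε := by
    apply ContinuousOn.intervalIntegrable
    rw [hicc]
    exact (ContinuousOn.mul (by fun_prop) hcont)
  have hFTC := intervalIntegral.integral_eq_sub_of_hasDerivAt hHd hInt
  have hHε : H ε = g ε := by simp [hH]
  have hH0 : H 0 = g 0 + ε * g1 0 + ε ^ 2 / 2 * g2 0 := by simp [hH]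
  have key : g ε - g 0 - ε * g1 0 - ε ^ 2 / 2 * g2 0 = ∫ t in (0:ℝ)..ε, (ε - t) ^ 2 / 2 * g3 t := by
    rw [hFTC, hHε, hH0]; ring
  rw [key]
  have hC0 : 0 ≤ C := le_trans (abs_nonneg _) (hC 0 (by constructor <;> simp [hε.le]))
  have hbd : ∀ t ∈ Set.uIoc 0 ε, ‖(ε - t) ^ 2 / 2 * g3 t‖ ≤ ε ^ 2 / 2 * C := by
    intro t ht
    rw [Set.uIoc_of_le hε.le] at ht
    have h1 : |(ε - t) ^ 2 / 2| ≤ ε ^ 2 / 2 := by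
      rw [abs_div, abs_of_nonneg (sq_nonneg _)]
      have : (ε - t) ^ 2 ≤ ε ^ 2 := by nlinarith [ht.1, ht.2]
      simpa using div_le_div_of_nonneg_right this (by norm_num) |>.trans_eq rfl
    calc ‖(ε - t) ^ 2 / 2 * g3 t‖ = |(ε - t) ^ 2 / 2| * |g3 t| := abs_mul _ _
      _ ≤ ε ^ 2 / 2 * C := mul_le_mul h1 (hC t ⟨ht.1.le, ht.2⟩) (abs_nonneg _) (by positivity)
  have := intervalIntegral.norm_integral_le_of_norm_le_const hbd
  rw [show |ε - 0| = ε by rw [sub_zero]; exact abs_of_pos hε] at this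
  calc |∫ t in (0:ℝ)..ε, (ε - t) ^ 2 / 2 * g3 t| ≤ ε ^ 2 / 2 * C * ε := this
    _ = ε ^ 3 / 2 * C := by ring

lemma aux_le_biSup {φ : ℝ → ℝ} {ε₀ : ℝ} (hφ : ContinuousOn φ (Set.Icc 0 ε₀))
    {t : ℝ} (ht : t ∈ Set.Icc 0 ε₀) : φ t ≤ ⨆ t' ∈ Set.Icc 0 ε₀, φ t' := by
  obtain ⟨C, hC⟩ := (isCompact_Icc).exists_bound_of_continuousOn hφ
  have hbdd : BddAbove (Set.range fun t' => ⨆ _ : t' ∈ Set.Icc 0 ε₀, φ t') := by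
    refine ⟨max C 0, ?_⟩
    rintro y ⟨t', rfl⟩
    refine Real.iSup_le (fun h => ?_) (le_max_right _ _)
    exact le_trans (le_trans (le_abs_self _) (hC t' h)) (le_max_left _ _)
  calc φ t = ⨆ _ : t ∈ Set.Icc 0 ε₀, φ t := (ciSup_pos (f := fun _ : t ∈ Set.Icc 0 ε₀ => φ t) ht).symm
    _ ≤ ⨆ t' ∈ Set.Icc 0 ε₀, φ t' := le_ciSup hbdd t

set_option maxHeartbeats 1600000 in
theorem tail_estimate_halfline (f : ℝ → ℝ) (c ε₀ : ℝ) (hc : 0 < c) (hε₀ : 0 < ε₀)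
    (hf3 : ContDiffOn ℝ 3 f (Set.Ioi 0))
    (hsupp : ∀ x ≤ (0:ℝ), f x = 0) (hpos : ∀ x > (0:ℝ), 0 < f x)
    (hdens : ∫ x, f x = 1)
    (h1 : IntegrableOn (fun x => (f x)⁻¹ * (deriv f x) ^ 2) (Set.Ioi c))
    (h2 : IntegrableOn (fun x =>
      (⨆ t₁ ∈ Set.Icc (0:ℝ) ε₀, f (x + t₁)) *
      (⨆ t₂ ∈ Set.Icc (0:ℝ) ε₀, |(f (x + t₂))⁻¹ ^ 3 * (deriv f (x + t₂)) ^ 3|))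
      (Set.Ioi c))
    (h3 : IntegrableOn (fun x =>
      (⨆ t₁ ∈ Set.Icc (0:ℝ) ε₀, f (x + t₁)) *
      (⨆ t₂ ∈ Set.Icc (0:ℝ) ε₀,
        |(f (x + t₂))⁻¹ ^ 2 * deriv f (x + t₂) * deriv (deriv f) (x + t₂)|))
      (Set.Ioi c))
    (h4 : IntegrableOn (fun x =>
      (⨆ t₁ ∈ Set.Icc (0:ℝ) ε₀, f (x + t₁)) *
      (⨆ t₂ ∈ Set.Icc (0:ℝ) ε₀,
        |(f (x + t₂))⁻¹ * deriv (deriv (deriv f)) (x + t₂)|))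
      (Set.Ioi c)) :
    TendstoUniformlyOn
      (fun ε s =>
        ((∫ x in Set.Ioi c, f x ^ (1 - s) * f (x + ε) ^ s)
          - (∫ x in Set.Ioi c, f x)
          + f c * s * ε + s / 2 * deriv f c * ε ^ 2) / ε ^ 2)
      (fun s => -(s * (1 - s) / 2) * ∫ x in Set.Ioi c, (f x)⁻¹ * (deriv f x) ^ 2)
      (nhdsWithin 0 (Set.Ioi 0)) (Set.Ioo 0 1) := by
  have hopen : IsOpen (Set.Ioi (0:ℝ)) := isOpen_Ioi
  set d1 := deriv f with hd1def
  set d2 := deriv (deriv f) with hd2def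
  set d3 := deriv (deriv (deriv f)) with hd3def
  -- regularity
  have hfc : ContinuousOn f (Set.Ioi 0) := hf3.continuousOn
  have hd1cd : ContDiffOn ℝ 2 d1 (Set.Ioi 0) := hf3.deriv_of_isOpen hopen (by norm_num)
  have hd2cd : ContDiffOn ℝ 1 d2 (Set.Ioi 0) := hd1cd.deriv_of_isOpen hopen (by norm_num)
  have hd1c : ContinuousOn d1 (Set.Ioi 0) := hd1cd.continuousOn
  have hd2c : ContinuousOn d2 (Set.Ioi 0) := hd2cd.continuousOn
  have hd3c : ContinuousOn d3 (Set.Ioi 0) := hd2cd.continuousOn_deriv_of_isOpen hopen le_rfl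
  have hfd : ∀ x ∈ Set.Ioi (0:ℝ), HasDerivAt f (d1 x) x := fun x hx =>
    ((hf3.differentiableOn (by norm_num)).differentiableAt (hopen.mem_nhds hx)).hasDerivAt
  have hd1d : ∀ x ∈ Set.Ioi (0:ℝ), HasDerivAt d1 (d2 x) x := fun x hx =>
    ((hd1cd.differentiableOn (by norm_num)).differentiableAt (hopen.mem_nhds hx)).hasDerivAt
  have hd2d : ∀ x ∈ Set.Ioi (0:ℝ), HasDerivAt d2 (d3 x) x := fun x hx =>
    ((hd2cd.differentiableOn (by norm_num)).differentiableAt (hopen.mem_nhds hx)).hasDerivAt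
  have hsub : Set.Ioi c ⊆ Set.Ioi (0:ℝ) := Set.Ioi_subset_Ioi hc.le
  have hms : MeasurableSet (Set.Ioi c) := measurableSet_Ioi
  -- integrability of f
  have hfint : Integrable f := by
    by_contra h
    rw [integral_undef h] at hdens; norm_num at hdens
  have hfIoi : IntegrableOn f (Set.Ioi c) := hfint.integrableOn
  have hfnn : ∀ x, 0 ≤ f x := by
    intro x
    rcases le_or_gt x 0 with h | h
    · exact le_of_eq (hsupp x h).symm
    · exact (hpos x h).le
  -- d1 integrable
  have hd1int : IntegrableOn d1 (Set.Ioi c) := by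
    have hbd : ∀ x ∈ Set.Ioi c, ‖d1 x‖ ≤ (f x + (f x)⁻¹ * d1 x ^ 2) / 2 := by
      intro x hx
      have hfx : 0 < f x := hpos x (hsub hx)
      rw [Real.norm_eq_abs, le_div_iff₀ (by norm_num : (0:ℝ) < 2)]
      have h2 : 2 * |d1 x| * f x ≤ f x ^ 2 + d1 x ^ 2 := by
        nlinarith [sq_nonneg (f x - |d1 x|), sq_abs (d1 x)]
      rw [← mul_le_mul_iff_of_pos_right hfx]
      have hinv : (f x)⁻¹ * d1 x ^ 2 * f x = d1 x ^ 2 := by field_simp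
      calc |d1 x| * 2 * f x = 2 * |d1 x| * f x := by ring
        _ ≤ f x ^ 2 + d1 x ^ 2 := h2
        _ = (f x + (f x)⁻¹ * d1 x ^ 2) * f x := by field_simp
    refine Integrable.mono' ((hfIoi.add h1).div_const 2) ?_ ?_
    · exact (hd1c.mono hsub).aestronglyMeasurable hms
    · exact (ae_restrict_iff' hms).2 (Filter.Eventually.of_forall hbd)
  -- FTC helper on [c, T]
  have hftc : ∀ (g g' : ℝ → ℝ), (∀ x ∈ Set.Ioi (0:ℝ), HasDerivAt g (g' x) x) →
      ContinuousOn g' (Set.Ioi 0) → ∀ T, c ≤ T → g T = g c + ∫ t in c..T, g' t := by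
    intro g g' hg hg' T hT
    have huicc : Set.uIcc c T = Set.Icc c T := Set.uIcc_of_le hT
    have h1 : ∀ t ∈ Set.uIcc c T, HasDerivAt g (g' t) t := by
      intro t ht
      rw [huicc] at ht
      exact hg t (lt_of_lt_of_le hc ht.1)
    have h2 : IntervalIntegrable g' volume c T := by
      apply ContinuousOn.intervalIntegrable
      rw [huicc]
      exact hg'.mono (fun t ht => lt_of_lt_of_le hc ht.1)
    have := intervalIntegral.integral_eq_sub_of_hasDerivAt h1 h2
    linarith [this]
  -- limit lemma: g tendsto (g c + ∫_{Ioi c} g')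
  have hlim_gen : ∀ (g g' : ℝ → ℝ), (∀ x ∈ Set.Ioi (0:ℝ), HasDerivAt g (g' x) x) →
      ContinuousOn g' (Set.Ioi 0) → IntegrableOn g' (Set.Ioi c) →
      Tendsto g atTop (nhds (g c + ∫ x in Set.Ioi c, g' x)) := by
    intro g g' hg hg' hint
    have h1 := intervalIntegral_tendsto_integral_Ioi c hint tendsto_id
    have h2 : Tendsto (fun T => g c + ∫ t in c..T, g' t) atTop
        (nhds (g c + ∫ x in Set.Ioi c, g' x)) := tendsto_const_nhds.add h1
    apply h2.congr'
    filter_upwards [Filter.eventually_ge_atTop c] with T hT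
    exact (hftc g g' hg hg' T hT).symm
  -- f tends to 0, ∫ d1 = - f c
  have hfc0 : f c + ∫ x in Set.Ioi c, d1 x = 0 :=
    aux_limit_zero hfIoi (hlim_gen f d1 hfd hd1c hd1int)
  have hintd1 : ∫ x in Set.Ioi c, d1 x = - f c := by linarith
  -- abbreviations for the sup functions
  set S : ℝ → ℝ := fun x => ⨆ t₁ ∈ Set.Icc (0:ℝ) ε₀, f (x + t₁) with hSdef
  set T2 : ℝ → ℝ := fun x => ⨆ t₂ ∈ Set.Icc (0:ℝ) ε₀, |(f (x + t₂))⁻¹ ^ 3 * d1 (x + t₂) ^ 3| with hT2def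
  set T3 : ℝ → ℝ := fun x => ⨆ t₂ ∈ Set.Icc (0:ℝ) ε₀, |(f (x + t₂))⁻¹ ^ 2 * d1 (x + t₂) * d2 (x + t₂)| with hT3def
  set T4 : ℝ → ℝ := fun x => ⨆ t₂ ∈ Set.Icc (0:ℝ) ε₀, |(f (x + t₂))⁻¹ * d3 (x + t₂)| with hT4def
  have hA2 : IntegrableOn (fun x => S x * T2 x) (Set.Ioi c) := h2
  have hA3 : IntegrableOn (fun x => S x * T3 x) (Set.Ioi c) := h3
  have hA4 : IntegrableOn (fun x => S x * T4 x) (Set.Ioi c) := h4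
  -- the key pointwise Taylor estimate
  have key : ∀ s ∈ Set.Ioo (0:ℝ) 1, ∀ ε : ℝ, 0 < ε → ε ≤ ε₀ → ∀ x ∈ Set.Ioi c,
      |f x ^ (1-s) * f (x+ε) ^ s - f x - ε * (s * d1 x)
        - ε^2/2 * (s*(s-1)*((f x)⁻¹ * d1 x^2) + s * d2 x)|
      ≤ ε^3/2 * (2 * (S x * T2 x) + 3 * (S x * T3 x) + S x * T4 x) := by
    rintro s ⟨hs0, hs1⟩ ε hε hεε₀ x hx
    have hx0 : (0:ℝ) < x := lt_trans hc hx
    have hfx : 0 < f x := hpos x hx0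
    have hxt : ∀ t ∈ Set.Icc (0:ℝ) ε, (0:ℝ) < x + t := fun t ht => by
      have := ht.1; linarith
    have hfxt : ∀ t ∈ Set.Icc (0:ℝ) ε, 0 < f (x + t) := fun t ht => hpos _ (hxt t ht)
    set g : ℝ → ℝ := fun t => f x ^ (1-s) * f (x+t) ^ s with hgdef
    set g1 : ℝ → ℝ := fun t => f x ^ (1-s) * (s * f (x+t) ^ (s-1) * d1 (x+t)) with hg1def
    set g2 : ℝ → ℝ := fun t => f x ^ (1-s) *
      (s * ((s-1) * f (x+t) ^ (s-2) * d1 (x+t)^2 + f (x+t) ^ (s-1) * d2 (x+t))) with hg2def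
    set g3 : ℝ → ℝ := fun t => f x ^ (1-s) *
      (s * ((s-1)*(s-2) * f (x+t) ^ (s-3) * d1 (x+t)^3
        + 3*(s-1) * f (x+t) ^ (s-2) * d1 (x+t) * d2 (x+t)
        + f (x+t) ^ (s-1) * d3 (x+t))) with hg3def
    -- inner derivative helpers
    have hshift : ∀ (F F' : ℝ → ℝ), (∀ y ∈ Set.Ioi (0:ℝ), HasDerivAt F (F' y) y) →
        ∀ t ∈ Set.Icc (0:ℝ) ε, HasDerivAt (fun t' => F (x + t')) (F' (x+t)) t := by
      intro F F' hF t ht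
      have h := (hF (x+t) (hxt t ht)).comp t ((hasDerivAt_id t).const_add x)
      exact h.congr_deriv (mul_one _)
    have hP : ∀ (p : ℝ), ∀ t ∈ Set.Icc (0:ℝ) ε,
        HasDerivAt (fun t' => f (x+t') ^ p) (p * f (x+t) ^ (p-1) * d1 (x+t)) t := by
      intro p t ht
      have h := (Real.hasDerivAt_rpow_const (x := f (x+t)) (p := p)
        (Or.inl (ne_of_gt (hfxt t ht)))).comp t (hshift f d1 hfd t ht)
      exact h.congr_deriv (by ring)
    have hder1 : ∀ t ∈ Set.Icc (0:ℝ) ε, HasDerivAt g (g1 t) t := by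
      intro t ht
      exact ((hP s t ht).const_mul (f x ^ (1-s)))
    have hder2 : ∀ t ∈ Set.Icc (0:ℝ) ε, HasDerivAt g1 (g2 t) t := by
      intro t ht
      have ha := ((hP (s-1) t ht).const_mul s).mul (hshift d1 d2 hd1d t ht)
      have := ha.const_mul (f x ^ (1-s))
      refine this.congr_deriv ?_
      simp only [hg2def]
      ring
    have hder3 : ∀ t ∈ Set.Icc (0:ℝ) ε, HasDerivAt g2 (g3 t) t := by
      intro t ht
      have hd1sq : HasDerivAt (fun t' => d1 (x+t')^2)
          (2 * d1 (x+t) * d2 (x+t)) t := by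
        have := (hshift d1 d2 hd1d t ht).pow 2
        refine this.congr_deriv ?_
        push_cast
        ring
      have hA := ((hP (s-2) t ht).const_mul (s-1)).mul hd1sq
      have hB := (hP (s-1) t ht).mul (hshift d2 d3 hd2d t ht)
      have := ((hA.add hB).const_mul s).const_mul (f x ^ (1-s))
      refine this.congr_deriv ?_
      simp only [hg3def]
      ring
    -- continuity of g3 on [0, ε]
    have hmem : ∀ t ∈ Set.Icc (0:ℝ) ε, x + t ∈ Set.Ioi (0:ℝ) := fun t ht => hxt t ht
    have hcshift : ∀ (F : ℝ → ℝ), ContinuousOn F (Set.Ioi 0) →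
        ContinuousOn (fun t => F (x + t)) (Set.Icc (0:ℝ) ε) := by
      intro F hF
      exact hF.comp (continuous_const.add continuous_id).continuousOn hmem
    have hg3cont : ContinuousOn g3 (Set.Icc 0 ε) := by
      have hfne : ∀ t ∈ Set.Icc (0:ℝ) ε, f (x + t) ≠ 0 := fun t ht => ne_of_gt (hfxt t ht)
      have hrp : ∀ (p : ℝ), ContinuousOn (fun t => f (x+t) ^ p) (Set.Icc (0:ℝ) ε) := by
        intro p
        exact ContinuousOn.rpow_const (hcshift f hfc) (fun t ht => Or.inl (hfne t ht))
      apply ContinuousOn.mul continuousOn_const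
      apply ContinuousOn.mul continuousOn_const
      refine ContinuousOn.add (ContinuousOn.add ?_ ?_) ?_
      · exact ((continuousOn_const.mul (hrp (s-3))).mul
          (((hcshift d1 hd1c).pow 3)))
      · exact (((continuousOn_const.mul (hrp (s-2))).mul (hcshift d1 hd1c)).mul
          (hcshift d2 hd2c))
      · exact (hrp (s-1)).mul (hcshift d3 hd3c)
    -- bound |g3 t| ≤ C
    have hCbd : ∀ t ∈ Set.Icc (0:ℝ) ε,
        |g3 t| ≤ 2 * (S x * T2 x) + 3 * (S x * T3 x) + S x * T4 x := by
      intro t ht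
      have htε₀ : t ∈ Set.Icc (0:ℝ) ε₀ := ⟨ht.1, le_trans ht.2 hεε₀⟩
      have hmem₀ : ∀ r ∈ Set.Icc (0:ℝ) ε₀, x + r ∈ Set.Ioi (0:ℝ) := fun r hr => by
        have := hr.1; simp only [Set.mem_Ioi]; linarith
      have hcshift₀ : ∀ (F : ℝ → ℝ), ContinuousOn F (Set.Ioi 0) →
          ContinuousOn (fun r => F (x + r)) (Set.Icc (0:ℝ) ε₀) := by
        intro F hF
        exact hF.comp (continuous_const.add continuous_id).continuousOn hmem₀
      have hfne₀ : ∀ r ∈ Set.Icc (0:ℝ) ε₀, f (x + r) ≠ 0 :=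
        fun r hr => ne_of_gt (hpos _ (hmem₀ r hr))
      have hu0 : 0 < f (x + t) := hfxt t ht
      -- rpow decompositions
      have hsplit : ∀ k : ℕ, f (x+t) ^ (s - (k:ℝ)) = f (x+t) ^ s * (f (x+t))⁻¹ ^ k := by
        intro k
        rw [show s - (k:ℝ) = s + -(k:ℝ) by ring, Real.rpow_add hu0,
          Real.rpow_neg hu0.le, Real.rpow_natCast, inv_pow]
      have hp3 : f (x+t) ^ (s - 3) = f (x+t) ^ s * (f (x+t))⁻¹ ^ 3 := by
        have := hsplit 3; push_cast at this; exact this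
      have hp2 : f (x+t) ^ (s - 2) = f (x+t) ^ s * (f (x+t))⁻¹ ^ 2 := by
        have := hsplit 2; push_cast at this; exact this
      have hp1 : f (x+t) ^ (s - 1) = f (x+t) ^ s * (f (x+t))⁻¹ := by
        have := hsplit 1; push_cast at this; simpa using this
      have hg3t : g3 t = (f x ^ (1-s) * f (x+t) ^ s) *
          (s * ((s-1)*(s-2) * ((f (x+t))⁻¹ ^ 3 * d1 (x+t)^3)
            + 3*(s-1) * ((f (x+t))⁻¹ ^ 2 * d1 (x+t) * d2 (x+t))
            + (f (x+t))⁻¹ * d3 (x+t))) := by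
        simp only [hg3def]
        rw [hp3, hp2, hp1]
        ring
      -- the product of rpow's is at most S x
      have hfS : ∀ r ∈ Set.Icc (0:ℝ) ε₀, f (x + r) ≤ S x := by
        intro r hr
        exact aux_le_biSup (hcshift₀ f hfc) hr
      have hfxS : f x ≤ S x := by
        have := hfS 0 ⟨le_refl 0, hε₀.le⟩
        simpa using this
      have hftS : f (x+t) ≤ S x := hfS t htε₀
      have hprod_le : f x ^ (1-s) * f (x+t) ^ s ≤ S x := by
        rcases le_total (f x) (f (x+t)) with hle | hle
        · calc f x ^ (1-s) * f (x+t) ^ s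
              ≤ f (x+t) ^ (1-s) * f (x+t) ^ s :=
                mul_le_mul_of_nonneg_right
                  (Real.rpow_le_rpow hfx.le hle (by linarith))
                  (Real.rpow_nonneg hu0.le s)
            _ = f (x+t) ^ ((1-s) + s) := (Real.rpow_add hu0 _ _).symm
            _ = f (x+t) := by norm_num
            _ ≤ S x := hftS
        · calc f x ^ (1-s) * f (x+t) ^ s
              ≤ f x ^ (1-s) * f x ^ s :=
                mul_le_mul_of_nonneg_left
                  (Real.rpow_le_rpow hu0.le hle hs0.le)
                  (Real.rpow_nonneg hfx.le _)
            _ = f x ^ ((1-s) + s) := (Real.rpow_add hfx _ _).symm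
            _ = f x := by norm_num
            _ ≤ S x := hfxS
      have hprod_nn : 0 ≤ f x ^ (1-s) * f (x+t) ^ s :=
        mul_nonneg (Real.rpow_nonneg hfx.le _) (Real.rpow_nonneg hu0.le _)
      -- T bounds
      have hT2b : |(f (x+t))⁻¹ ^ 3 * d1 (x+t) ^ 3| ≤ T2 x := by
        refine aux_le_biSup (φ := fun r => |(f (x + r))⁻¹ ^ 3 * d1 (x + r) ^ 3|) ?_ htε₀
        exact (((hcshift₀ f hfc).inv₀ hfne₀).pow 3).mul (((hcshift₀ d1 hd1c)).pow 3) |>.abs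
      have hT3b : |(f (x+t))⁻¹ ^ 2 * d1 (x+t) * d2 (x+t)| ≤ T3 x := by
        refine aux_le_biSup (φ := fun r => |(f (x + r))⁻¹ ^ 2 * d1 (x + r) * d2 (x + r)|) ?_ htε₀
        exact ((((hcshift₀ f hfc).inv₀ hfne₀).pow 2).mul (hcshift₀ d1 hd1c)).mul
          (hcshift₀ d2 hd2c) |>.abs
      have hT4b : |(f (x+t))⁻¹ * d3 (x+t)| ≤ T4 x := by
        refine aux_le_biSup (φ := fun r => |(f (x + r))⁻¹ * d3 (x + r)|) ?_ htε₀
        exact (((hcshift₀ f hfc).inv₀ hfne₀)).mul (hcshift₀ d3 hd3c) |>.abs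
      -- |E| estimate
      set X1 := (f (x+t))⁻¹ ^ 3 * d1 (x+t)^3 with hX1
      set X2 := (f (x+t))⁻¹ ^ 2 * d1 (x+t) * d2 (x+t) with hX2
      set X3 := (f (x+t))⁻¹ * d3 (x+t) with hX3
      have habs_s : |s| ≤ 1 := by rw [abs_of_pos hs0]; linarith
      have habs_s1 : |s-1| ≤ 1 := by rw [abs_of_neg (by linarith : s - 1 < 0)]; linarith
      have habs_s2 : |s-2| ≤ 2 := by rw [abs_of_neg (by linarith : s - 2 < 0)]; linarith
      have hE : |s * ((s-1)*(s-2) * X1 + 3*(s-1) * X2 + X3)|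
          ≤ 2 * |X1| + 3 * |X2| + |X3| := by
        calc |s * ((s-1)*(s-2) * X1 + 3*(s-1) * X2 + X3)|
            = |s| * |(s-1)*(s-2) * X1 + 3*(s-1) * X2 + X3| := abs_mul _ _
          _ ≤ 1 * |(s-1)*(s-2) * X1 + 3*(s-1) * X2 + X3| :=
              mul_le_mul_of_nonneg_right habs_s (abs_nonneg _)
          _ = |(s-1)*(s-2) * X1 + 3*(s-1) * X2 + X3| := one_mul _
          _ ≤ |(s-1)*(s-2) * X1| + |3*(s-1) * X2| + |X3| := abs_add_three _ _ _
          _ ≤ 2 * |X1| + 3 * |X2| + |X3| := by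
              have e1 : |(s-1)*(s-2) * X1| = |s-1| * |s-2| * |X1| := by
                rw [abs_mul, abs_mul]
              have e2 : |3*(s-1) * X2| = 3 * |s-1| * |X2| := by
                rw [abs_mul, abs_mul]
                norm_num
              rw [e1, e2]
              have hprod12 : |s-1| * |s-2| ≤ 2 := by
                calc |s-1| * |s-2| ≤ 1 * 2 :=
                    mul_le_mul habs_s1 habs_s2 (abs_nonneg _) zero_le_one
                  _ = 2 := by norm_num
              have t1 : |s-1| * |s-2| * |X1| ≤ 2 * |X1| :=
                mul_le_mul_of_nonneg_right hprod12 (abs_nonneg _)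
              have t2 : 3 * |s-1| * |X2| ≤ 3 * |X2| := by
                nlinarith [abs_nonneg X2, abs_nonneg (s-1)]
              linarith
      calc |g3 t| = (f x ^ (1-s) * f (x+t) ^ s) *
            |s * ((s-1)*(s-2) * X1 + 3*(s-1) * X2 + X3)| := by
            rw [hg3t, abs_mul, abs_of_nonneg hprod_nn]
        _ ≤ S x * (2 * |X1| + 3 * |X2| + |X3|) := by
            apply mul_le_mul hprod_le hE (abs_nonneg _)
            exact le_trans hprod_nn hprod_le
        _ ≤ S x * (2 * T2 x + 3 * T3 x + T4 x) := by
            apply mul_le_mul_of_nonneg_left _ (le_trans hprod_nn hprod_le)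
            linarith [hT2b, hT3b, hT4b]
        _ = 2 * (S x * T2 x) + 3 * (S x * T3 x) + S x * T4 x := by ring
    -- apply Taylor
    have htay := aux_taylor hε hder1 hder2 hder3 hg3cont hCbd
    -- simplify g 0, g1 0, g2 0
    have e0 : g 0 = f x := by
      simp only [hgdef]
      rw [add_zero, ← Real.rpow_add hfx]
      norm_num
    have e1 : g1 0 = s * d1 x := by
      simp only [hg1def]
      rw [add_zero, show f x ^ (1-s) * (s * f x ^ (s-1) * d1 x)
        = (f x ^ (1-s) * f x ^ (s-1)) * (s * d1 x) by ring, ← Real.rpow_add hfx]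
      norm_num
    have e2 : g2 0 = s*(s-1)*((f x)⁻¹ * d1 x^2) + s * d2 x := by
      simp only [hg2def]
      rw [add_zero]
      have ha : f x ^ (1-s) * f x ^ (s-2) = (f x)⁻¹ := by
        rw [← Real.rpow_add hfx, show (1-s) + (s-2) = -1 by ring, Real.rpow_neg_one]
      have hb : f x ^ (1-s) * f x ^ (s-1) = 1 := by
        rw [← Real.rpow_add hfx, show (1-s) + (s-1) = 0 by ring, Real.rpow_zero]
      calc f x ^ (1-s) * (s * ((s-1) * f x ^ (s-2) * d1 x^2 + f x ^ (s-1) * d2 x))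
          = s*(s-1)*((f x ^ (1-s) * f x ^ (s-2)) * d1 x^2)
            + s * ((f x ^ (1-s) * f x ^ (s-1)) * d2 x) := by ring
        _ = s*(s-1)*((f x)⁻¹ * d1 x^2) + s * d2 x := by rw [ha, hb]; ring
    rw [e0, e1, e2] at htay
    simpa only [hgdef] using htay
  -- M integrable
  have hMint : IntegrableOn (fun x => 2 * (S x * T2 x) + 3 * (S x * T3 x) + S x * T4 x)
      (Set.Ioi c) := ((hA2.const_mul 2).add (hA3.const_mul 3)).add hA4
  -- measurability helpers
  have hcont_shift : ∀ (F : ℝ → ℝ), ContinuousOn F (Set.Ioi 0) → ∀ ε : ℝ, 0 ≤ ε →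
      ContinuousOn (fun x => F (x + ε)) (Set.Ioi c) := by
    intro F hF ε hε
    refine hF.comp (continuous_id.add continuous_const).continuousOn ?_
    intro x hx
    have : c < x := hx
    simp only [Set.mem_Ioi]
    linarith
  have hΦcont : ∀ s ∈ Set.Ioo (0:ℝ) 1, ∀ ε : ℝ, 0 ≤ ε →
      ContinuousOn (fun x => f x ^ (1-s) * f (x+ε) ^ s) (Set.Ioi c) := by
    rintro s ⟨hs0, hs1⟩ ε hε
    refine ContinuousOn.mul ?_ ?_
    · exact ContinuousOn.rpow_const (hfc.mono hsub) (fun x hx => Or.inr (by linarith))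
    · exact ContinuousOn.rpow_const (hcont_shift f hfc ε hε) (fun x hx => Or.inr hs0.le)
  -- integrability of the shifted density
  have hfshift : ∀ ε : ℝ, IntegrableOn (fun x => f (x + ε)) (Set.Ioi c) := by
    intro ε
    have : Integrable (fun x => f (x + ε)) := by
      have h := (measurePreserving_add_right (volume : Measure ℝ) ε).integrable_comp
        hfint.aestronglyMeasurable
      exact h.2 hfint
    exact this.integrableOn
  -- integrability of Φ
  have hΦint : ∀ s ∈ Set.Ioo (0:ℝ) 1, ∀ ε : ℝ, 0 ≤ ε →
      IntegrableOn (fun x => f x ^ (1-s) * f (x+ε) ^ s) (Set.Ioi c) := by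
    rintro s hs ε hε
    obtain ⟨hs0, hs1⟩ := hs
    refine Integrable.mono' (hfIoi.add (hfshift ε)) ((hΦcont s ⟨hs0, hs1⟩ ε hε).aestronglyMeasurable hms) ?_
    refine (ae_restrict_iff' hms).2 (Filter.Eventually.of_forall fun x hx => ?_)
    have hx0 : (0:ℝ) < x := lt_trans hc hx
    have hfx : 0 < f x := hpos x hx0
    have hfxe : 0 < f (x + ε) := hpos _ (by linarith)
    have hnn : 0 ≤ f x ^ (1-s) * f (x+ε) ^ s :=
      mul_nonneg (Real.rpow_nonneg hfx.le _) (Real.rpow_nonneg hfxe.le _)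
    rw [Real.norm_eq_abs, abs_of_nonneg hnn]
    rcases le_total (f x) (f (x+ε)) with hle | hle
    · calc f x ^ (1-s) * f (x+ε) ^ s
          ≤ f (x+ε) ^ (1-s) * f (x+ε) ^ s :=
            mul_le_mul_of_nonneg_right (Real.rpow_le_rpow hfx.le hle (by linarith))
              (Real.rpow_nonneg hfxe.le s)
        _ = f (x+ε) ^ ((1-s) + s) := (Real.rpow_add hfxe _ _).symm
        _ = f (x+ε) := by norm_num
        _ ≤ f x + f (x+ε) := by linarith
    · calc f x ^ (1-s) * f (x+ε) ^ s
          ≤ f x ^ (1-s) * f x ^ s :=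
            mul_le_mul_of_nonneg_left (Real.rpow_le_rpow hfxe.le hle (by linarith))
              (Real.rpow_nonneg hfx.le _)
        _ = f x ^ ((1-s) + s) := (Real.rpow_add hfx _ _).symm
        _ = f x := by norm_num
        _ ≤ f x + f (x+ε) := by linarith
  -- the remainder function is integrable (without knowing d2 integrable)
  have hRcont : ∀ s ∈ Set.Ioo (0:ℝ) 1, ∀ ε : ℝ, 0 ≤ ε → ContinuousOn (fun x =>
      f x ^ (1-s) * f (x+ε) ^ s - f x - ε * (s * d1 x)
        - ε^2/2 * (s*(s-1)*((f x)⁻¹ * d1 x^2) + s * d2 x)) (Set.Ioi c) := by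
    rintro s hs ε hε
    have hfnz : ∀ x ∈ Set.Ioi c, f x ≠ 0 := fun x hx => ne_of_gt (hpos x (hsub hx))
    refine ContinuousOn.sub (ContinuousOn.sub (ContinuousOn.sub (hΦcont s hs ε hε)
      (hfc.mono hsub)) ?_) ?_
    · exact continuousOn_const.mul (continuousOn_const.mul (hd1c.mono hsub))
    · refine continuousOn_const.mul (ContinuousOn.add ?_ ?_)
      · exact continuousOn_const.mul (((hfc.mono hsub).inv₀ hfnz).mul ((hd1c.mono hsub).pow 2))
      · exact continuousOn_const.mul (hd2c.mono hsub)
  have hRint : ∀ s ∈ Set.Ioo (0:ℝ) 1, ∀ ε : ℝ, 0 < ε → ε ≤ ε₀ → IntegrableOn (fun x =>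
      f x ^ (1-s) * f (x+ε) ^ s - f x - ε * (s * d1 x)
        - ε^2/2 * (s*(s-1)*((f x)⁻¹ * d1 x^2) + s * d2 x)) (Set.Ioi c) := by
    rintro s hs ε hε hεε₀
    refine Integrable.mono' (hMint.const_mul (ε^3/2))
      ((hRcont s hs ε hε.le).aestronglyMeasurable hms) ?_
    refine (ae_restrict_iff' hms).2 (Filter.Eventually.of_forall fun x hx => ?_)
    rw [Real.norm_eq_abs]
    exact key s hs ε hε hεε₀ x hx
  -- bootstrap: d2 is integrable
  have hd2int : IntegrableOn d2 (Set.Ioi c) := by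
    have h12 : (1/2 : ℝ) ∈ Set.Ioo (0:ℝ) 1 := by norm_num
    have hstep : IntegrableOn (fun x => ε₀^2/2 *
        ((1/2:ℝ)*((1/2:ℝ)-1)*((f x)⁻¹ * d1 x^2) + (1/2:ℝ) * d2 x)) (Set.Ioi c) := by
      have hd1' : IntegrableOn (fun x => ε₀ * ((1/2:ℝ) * d1 x)) (Set.Ioi c) := by
        have := hd1int.const_mul (ε₀ * (1/2:ℝ))
        exact this.congr (Filter.Eventually.of_forall fun x => by ring)
      have hA := ((((hΦint (1/2) h12 ε₀ hε₀.le).sub hfIoi).sub hd1').sub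
        (hRint (1/2) h12 ε₀ hε₀ le_rfl))
      refine hA.congr (Filter.Eventually.of_forall fun x => ?_)
      simp only [Pi.sub_apply]
      ring
    have h' := hstep.const_mul (2/ε₀^2)
    have hcomb := (h'.const_mul 2).add (h1.const_mul (1/2:ℝ))
    refine hcomb.congr (Filter.Eventually.of_forall fun x => ?_)
    have hε₀2 : ε₀^2 ≠ 0 := by positivity
    simp only [Pi.add_apply]
    field_simp
    ring
  have hd1c0 : d1 c + ∫ x in Set.Ioi c, d2 x = 0 :=
    aux_limit_zero hd1int (hlim_gen d1 d2 hd1d hd2c hd2int)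
  have hintd2 : ∫ x in Set.Ioi c, d2 x = - d1 c := by linarith
  -- notation for the two limiting integrals
  set J : ℝ := ∫ x in Set.Ioi c, (f x)⁻¹ * d1 x ^ 2 with hJdef
  set CM : ℝ := ∫ x in Set.Ioi c, (2 * (S x * T2 x) + 3 * (S x * T3 x) + S x * T4 x) with hCMdef
  have hSnn : ∀ x, 0 ≤ S x :=
    fun x => Real.iSup_nonneg fun t => Real.iSup_nonneg fun _ => hfnn _
  have hT2nn : ∀ x, 0 ≤ T2 x :=
    fun x => Real.iSup_nonneg fun t => Real.iSup_nonneg fun _ => abs_nonneg _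
  have hT3nn : ∀ x, 0 ≤ T3 x :=
    fun x => Real.iSup_nonneg fun t => Real.iSup_nonneg fun _ => abs_nonneg _
  have hT4nn : ∀ x, 0 ≤ T4 x :=
    fun x => Real.iSup_nonneg fun t => Real.iSup_nonneg fun _ => abs_nonneg _
  have hCMnn : 0 ≤ CM := by
    rw [hCMdef]
    refine setIntegral_nonneg hms fun x _ => ?_
    have := hSnn x; have := hT2nn x; have := hT3nn x; have := hT4nn x
    positivity
  -- the central quantitative estimate
  have main : ∀ s ∈ Set.Ioo (0:ℝ) 1, ∀ ε : ℝ, 0 < ε → ε ≤ ε₀ →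
      |((∫ x in Set.Ioi c, f x ^ (1-s) * f (x+ε) ^ s) - (∫ x in Set.Ioi c, f x)
        + f c * s * ε + s / 2 * d1 c * ε ^ 2)
        - ε^2 * (-(s * (1 - s) / 2) * J)| ≤ ε^3/2 * CM := by
    rintro s hs ε hε hεε₀
    obtain ⟨hs0, hs1⟩ := hs
    -- integrability of the linear pieces
    have hd1' : IntegrableOn (fun x => ε * (s * d1 x)) (Set.Ioi c) := by
      have := hd1int.const_mul (ε * s)
      exact this.congr (Filter.Eventually.of_forall fun x => by ring)
    have hG2a : IntegrableOn (fun x => s*(s-1)*((f x)⁻¹ * d1 x^2)) (Set.Ioi c) :=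
      h1.const_mul (s*(s-1))
    have hG2b : IntegrableOn (fun x => s * d2 x) (Set.Ioi c) := hd2int.const_mul s
    have hG2 : IntegrableOn (fun x => s*(s-1)*((f x)⁻¹ * d1 x^2) + s * d2 x) (Set.Ioi c) :=
      hG2a.add hG2b
    have hG2' : IntegrableOn (fun x => ε^2/2 * (s*(s-1)*((f x)⁻¹ * d1 x^2) + s * d2 x))
        (Set.Ioi c) := hG2.const_mul _
    have hΦ := hΦint s ⟨hs0, hs1⟩ ε hε.le
    have hR := hRint s ⟨hs0, hs1⟩ ε hε hεε₀
    -- compute ∫ R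
    have hIR : ∫ x in Set.Ioi c, (f x ^ (1-s) * f (x+ε) ^ s - f x - ε * (s * d1 x)
          - ε^2/2 * (s*(s-1)*((f x)⁻¹ * d1 x^2) + s * d2 x))
        = (∫ x in Set.Ioi c, f x ^ (1-s) * f (x+ε) ^ s) - (∫ x in Set.Ioi c, f x)
          - ε * s * (- f c) - ε^2/2 * (s*(s-1)*J + s * (- d1 c)) := by
      have hcomb1 : IntegrableOn (fun x => f x ^ (1-s) * f (x+ε) ^ s - f x) (Set.Ioi c) :=
        hΦ.sub hfIoi
      have hcomb2 : IntegrableOn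
          (fun x => f x ^ (1-s) * f (x+ε) ^ s - f x - ε * (s * d1 x)) (Set.Ioi c) :=
        hcomb1.sub hd1'
      rw [integral_sub hcomb2 hG2', integral_sub hcomb1 hd1', integral_sub hΦ hfIoi]
      have e1 : ∫ x in Set.Ioi c, ε * (s * d1 x) = ε * s * (- f c) := by
        rw [show (fun x => ε * (s * d1 x)) = fun x => (ε * s) * d1 x by funext x; ring]
        rw [integral_const_mul, hintd1]
      have e2 : ∫ x in Set.Ioi c, ε^2/2 * (s*(s-1)*((f x)⁻¹ * d1 x^2) + s * d2 x)
          = ε^2/2 * (s*(s-1)*J + s * (- d1 c)) := by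
        rw [integral_const_mul, integral_add hG2a hG2b, integral_const_mul,
          integral_const_mul, hintd2, hJdef]
      rw [e1, e2]
    -- the expression in question equals ∫ R
    have hEq : ((∫ x in Set.Ioi c, f x ^ (1-s) * f (x+ε) ^ s) - (∫ x in Set.Ioi c, f x)
          + f c * s * ε + s / 2 * d1 c * ε ^ 2) - ε^2 * (-(s * (1 - s) / 2) * J)
        = ∫ x in Set.Ioi c, (f x ^ (1-s) * f (x+ε) ^ s - f x - ε * (s * d1 x)
          - ε^2/2 * (s*(s-1)*((f x)⁻¹ * d1 x^2) + s * d2 x)) := by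
      rw [hIR]
      ring
    rw [hEq]
    -- bound the integral of R
    calc |∫ x in Set.Ioi c, (f x ^ (1-s) * f (x+ε) ^ s - f x - ε * (s * d1 x)
          - ε^2/2 * (s*(s-1)*((f x)⁻¹ * d1 x^2) + s * d2 x))|
        ≤ ∫ x in Set.Ioi c, |f x ^ (1-s) * f (x+ε) ^ s - f x - ε * (s * d1 x)
          - ε^2/2 * (s*(s-1)*((f x)⁻¹ * d1 x^2) + s * d2 x)| := by
          exact
            norm_integral_le_integral_norm (μ := volume.restrict (Set.Ioi c))
              (fun x => f x ^ (1-s) * f (x+ε) ^ s - f x - ε * (s * d1 x)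
                - ε^2/2 * (s*(s-1)*((f x)⁻¹ * d1 x^2) + s * d2 x))
      _ ≤ ∫ x in Set.Ioi c, ε^3/2 * (2 * (S x * T2 x) + 3 * (S x * T3 x) + S x * T4 x) := by
          refine setIntegral_mono_on hR.abs (hMint.const_mul _) hms fun x hx => ?_
          exact key s ⟨hs0, hs1⟩ ε hε hεε₀ x hx
      _ = ε^3/2 * CM := by rw [integral_const_mul, hCMdef]
  -- conclude the uniform convergence
  rw [Metric.tendstoUniformlyOn_iff]
  intro δ hδ
  have hCM1 : (0:ℝ) < CM + 1 := by linarith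
  set m : ℝ := min ε₀ (δ / (CM + 1)) with hmdef
  have hm : 0 < m := lt_min hε₀ (by positivity)
  filter_upwards [Ioc_mem_nhdsGT_of_mem (Set.mem_Ico.2 ⟨le_refl (0:ℝ), hm⟩)] with ε hεm
  intro s hs
  obtain ⟨hε0, hεle⟩ := hεm
  have hεε₀ : ε ≤ ε₀ := le_trans hεle (min_le_left _ _)
  have hεδ : ε ≤ δ / (CM + 1) := le_trans hεle (min_le_right _ _)
  have h := main s hs ε hε0 hεε₀
  have hε2 : (0:ℝ) < ε ^ 2 := by positivity
  rw [Real.dist_eq]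
  have hrw : -(s * (1 - s) / 2) * J
      - ((∫ x in Set.Ioi c, f x ^ (1 - s) * f (x + ε) ^ s) - (∫ x in Set.Ioi c, f x)
        + f c * s * ε + s / 2 * d1 c * ε ^ 2) / ε ^ 2
      = -(((∫ x in Set.Ioi c, f x ^ (1 - s) * f (x + ε) ^ s) - (∫ x in Set.Ioi c, f x)
        + f c * s * ε + s / 2 * d1 c * ε ^ 2) - ε^2 * (-(s * (1 - s) / 2) * J)) / ε ^ 2 := by
    field_simp
    ring
  rw [hrw, abs_div, abs_neg, abs_of_pos hε2]
  rw [div_lt_iff₀ hε2]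
  calc |((∫ x in Set.Ioi c, f x ^ (1 - s) * f (x + ε) ^ s) - (∫ x in Set.Ioi c, f x)
        + f c * s * ε + s / 2 * d1 c * ε ^ 2) - ε^2 * (-(s * (1 - s) / 2) * J)|
      ≤ ε^3/2 * CM := h
    _ < δ * ε ^ 2 := by
        have h1 : ε * CM < 2 * δ := by
          have h2 : ε * (CM + 1) ≤ δ := by
            rw [← le_div_iff₀ hCM1]
            exact hεδ
          nlinarith
        nlinarith
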